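/- arXiv:2401.14672 — 4 statements merged into one kernel-verified Lean document; each statement's English description precedes it below -/
import Mathlib

section
/- The function h_A is differentiable on (0,∞) with derivative h_A′(x) = h₀·x^{α−1} + A₀·(1−γ)·x^{α(1−γ)−1}; moreover h_A′ is strictly decreasing on (0,∞), h_A′(x) → +∞ as x → 0⁺, h_A′(x) → 0 as x → ∞, and h_A′ is a bijection from (0,∞) onto (0,∞). -/
open Filter Set

/-- The modified utility `h_A(x) = (1/α)·h₀·x^α + (1/α)·A₀·x^{α(1−γ)}` is differentiable
on `(0,∞)` with derivative `h_A′(x) = h₀·x^{α−1} + A₀·(1−γ)·x^{α(1−γ)−1}`; moreover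
`h_A′` is strictly decreasing on `(0,∞)`, tends to `+∞` at `0⁺`, tends to `0` at `∞`,
and is a bijection from `(0,∞)` onto `(0,∞)`. -/
theorem hA_deriv_properties
    (α γ h₀ A₀ : ℝ)
    (hα : α < 0 ∨ (0 < α ∧ α < 1))
    (hγ0 : 0 < γ) (hγ1 : γ ≤ 1)
    (hh0 : 0 < h₀) (hh1 : h₀ ≤ 1)
    (hA₀ : 0 ≤ A₀) :
    (∀ x : ℝ, 0 < x →
      HasDerivAt (fun x : ℝ => (1 / α) * h₀ * x ^ α + (1 / α) * A₀ * x ^ (α * (1 - γ)))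
        (h₀ * x ^ (α - 1) + A₀ * (1 - γ) * x ^ (α * (1 - γ) - 1)) x) ∧
    StrictAntiOn (fun x : ℝ => h₀ * x ^ (α - 1) + A₀ * (1 - γ) * x ^ (α * (1 - γ) - 1))
      (Ioi (0 : ℝ)) ∧
    Tendsto (fun x : ℝ => h₀ * x ^ (α - 1) + A₀ * (1 - γ) * x ^ (α * (1 - γ) - 1))
      (nhdsWithin 0 (Ioi (0 : ℝ))) atTop ∧
    Tendsto (fun x : ℝ => h₀ * x ^ (α - 1) + A₀ * (1 - γ) * x ^ (α * (1 - γ) - 1))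
      atTop (nhds 0) ∧
    BijOn (fun x : ℝ => h₀ * x ^ (α - 1) + A₀ * (1 - γ) * x ^ (α * (1 - γ) - 1))
      (Ioi (0 : ℝ)) (Ioi (0 : ℝ)) := by
  have hαne : α ≠ 0 := by rcases hα with h | h; exacts [h.ne, h.1.ne']
  have hα1 : α - 1 < 0 := by rcases hα with h | h <;> linarith [h]
  have hγ' : 0 ≤ 1 - γ := by linarith
  have hβ1 : α * (1 - γ) - 1 < 0 := by
    rcases hα with h | h
    · nlinarith
    · nlinarith [h.1, h.2]
  have hc : 0 ≤ A₀ * (1 - γ) := mul_nonneg hA₀ hγ'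
  set f : ℝ → ℝ := fun x => h₀ * x ^ (α - 1) + A₀ * (1 - γ) * x ^ (α * (1 - γ) - 1)
    with hf
  -- derivative
  have hder : ∀ x : ℝ, 0 < x →
      HasDerivAt (fun x : ℝ => (1 / α) * h₀ * x ^ α + (1 / α) * A₀ * x ^ (α * (1 - γ)))
        (f x) x := by
    intro x hx
    have h1 : HasDerivAt (fun x : ℝ => x ^ α) (α * x ^ (α - 1)) x :=
      Real.hasDerivAt_rpow_const (Or.inl hx.ne')
    have h2 : HasDerivAt (fun x : ℝ => x ^ (α * (1 - γ)))
        (α * (1 - γ) * x ^ (α * (1 - γ) - 1)) x :=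
      Real.hasDerivAt_rpow_const (Or.inl hx.ne')
    have := (h1.const_mul ((1 / α) * h₀)).add (h2.const_mul ((1 / α) * A₀))
    refine this.congr_deriv ?_
    simp only [hf]
    field_simp
  refine ⟨hder, ?_, ?_, ?_, ?_⟩
  -- strict anti
  · intro x hx y hy hxy
    simp only [hf]
    have h1 : h₀ * y ^ (α - 1) < h₀ * x ^ (α - 1) :=
      mul_lt_mul_of_pos_left (Real.rpow_lt_rpow_of_neg hx hxy hα1) hh0
    have h2 : A₀ * (1 - γ) * y ^ (α * (1 - γ) - 1) ≤ A₀ * (1 - γ) * x ^ (α * (1 - γ) - 1) :=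
      mul_le_mul_of_nonneg_left (Real.rpow_le_rpow_of_nonpos hx hxy.le hβ1.le) hc
    exact add_lt_add_of_lt_of_le h1 h2
  -- tendsto atTop at 0⁺
  · have hT : Tendsto (fun x : ℝ => x ^ (α - 1)) (nhdsWithin 0 (Ioi (0:ℝ))) atTop := by
      have h1 : Tendsto (fun x : ℝ => (x⁻¹) ^ (1 - α)) (nhdsWithin 0 (Ioi (0:ℝ))) atTop :=
        (tendsto_rpow_atTop (by linarith)).comp tendsto_inv_nhdsGT_zero
      refine h1.congr' ?_
      filter_upwards [self_mem_nhdsWithin] with x hx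
      rw [Real.inv_rpow (le_of_lt hx), ← Real.rpow_neg (le_of_lt hx)]
      congr 1; ring
    have hT' : Tendsto (fun x : ℝ => h₀ * x ^ (α - 1)) (nhdsWithin 0 (Ioi (0:ℝ))) atTop :=
      hT.const_mul_atTop hh0
    refine tendsto_atTop_mono' _ ?_ hT'
    filter_upwards [self_mem_nhdsWithin] with x hx
    have : (0:ℝ) ≤ A₀ * (1 - γ) * x ^ (α * (1 - γ) - 1) :=
      mul_nonneg hc (Real.rpow_nonneg (le_of_lt hx) _)
    simp only [hf]; linarith
  -- tendsto 0 at atTop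
  · have h1 : Tendsto (fun x : ℝ => x ^ (α - 1)) atTop (nhds 0) := by
      have := tendsto_rpow_neg_atTop (y := 1 - α) (by linarith)
      convert this using 2; ring
    have h2 : Tendsto (fun x : ℝ => x ^ (α * (1 - γ) - 1)) atTop (nhds 0) := by
      have := tendsto_rpow_neg_atTop (y := 1 - α * (1 - γ)) (by linarith)
      convert this using 2; ring
    have := (h1.const_mul h₀).add (h2.const_mul (A₀ * (1 - γ)))
    simpa using this
  -- bijection
  · have hanti : StrictAntiOn f (Ioi (0:ℝ)) := by
      intro x hx y hy hxy
      have h1 : h₀ * y ^ (α - 1) < h₀ * x ^ (α - 1) :=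
        mul_lt_mul_of_pos_left (Real.rpow_lt_rpow_of_neg hx hxy hα1) hh0
      have h2 : A₀ * (1 - γ) * y ^ (α * (1 - γ) - 1) ≤ A₀ * (1 - γ) * x ^ (α * (1 - γ) - 1) :=
        mul_le_mul_of_nonneg_left (Real.rpow_le_rpow_of_nonpos hx hxy.le hβ1.le) hc
      simp only [hf]; exact add_lt_add_of_lt_of_le h1 h2
    have hpos : ∀ x : ℝ, 0 < x → 0 < f x := by
      intro x hx
      have h1 : 0 < h₀ * x ^ (α - 1) := mul_pos hh0 (Real.rpow_pos_of_pos hx _)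
      have h2 : (0:ℝ) ≤ A₀ * (1 - γ) * x ^ (α * (1 - γ) - 1) :=
        mul_nonneg hc (Real.rpow_nonneg hx.le _)
      simp only [hf]; linarith
    have hcont : ContinuousOn f (Ioi (0:ℝ)) := fun x hx =>
      (((continuousAt_const.mul (Real.continuousAt_rpow_const x (α - 1)
          (Or.inl (ne_of_gt hx)))).add (continuousAt_const.mul
          (Real.continuousAt_rpow_const x (α * (1 - γ) - 1)
          (Or.inl (ne_of_gt hx))))).continuousWithinAt)
    refine ⟨fun x hx => hpos x hx, hanti.injOn, ?_⟩
    intro y hy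
    -- find a near 0 with f a > y
    have hT0 : Tendsto f (nhdsWithin 0 (Ioi (0:ℝ))) atTop := by
      have hT : Tendsto (fun x : ℝ => x ^ (α - 1)) (nhdsWithin 0 (Ioi (0:ℝ))) atTop := by
        have h1 : Tendsto (fun x : ℝ => (x⁻¹) ^ (1 - α)) (nhdsWithin 0 (Ioi (0:ℝ))) atTop :=
          (tendsto_rpow_atTop (by linarith)).comp tendsto_inv_nhdsGT_zero
        refine h1.congr' ?_
        filter_upwards [self_mem_nhdsWithin] with x hx
        rw [Real.inv_rpow (le_of_lt hx), ← Real.rpow_neg (le_of_lt hx)]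
        congr 1; ring
      refine tendsto_atTop_mono' _ ?_ (hT.const_mul_atTop hh0)
      filter_upwards [self_mem_nhdsWithin] with x hx
      have : (0:ℝ) ≤ A₀ * (1 - γ) * x ^ (α * (1 - γ) - 1) :=
        mul_nonneg hc (Real.rpow_nonneg (le_of_lt hx) _)
      simp only [hf]; linarith
    have hTinf : Tendsto f atTop (nhds 0) := by
      have h1 : Tendsto (fun x : ℝ => x ^ (α - 1)) atTop (nhds 0) := by
        have := tendsto_rpow_neg_atTop (y := 1 - α) (by linarith)
        convert this using 2; ring
      have h2 : Tendsto (fun x : ℝ => x ^ (α * (1 - γ) - 1)) atTop (nhds 0) := by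
        have := tendsto_rpow_neg_atTop (y := 1 - α * (1 - γ)) (by linarith)
        convert this using 2; ring
      have := (h1.const_mul h₀).add (h2.const_mul (A₀ * (1 - γ)))
      simpa using this
    obtain ⟨a, ha, hfa⟩ : ∃ a : ℝ, 0 < a ∧ y < f a := by
      have := (hT0.eventually_gt_atTop y).and self_mem_nhdsWithin
      obtain ⟨a, ha1, ha2⟩ := this.exists
      exact ⟨a, ha2, ha1⟩
    obtain ⟨b, hab, hfb⟩ : ∃ b : ℝ, a < b ∧ f b < y := by
      have := (hTinf.eventually (gt_mem_nhds hy)).and (eventually_gt_atTop a)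
      obtain ⟨b, hb1, hb2⟩ := this.exists
      exact ⟨b, hb2, hb1⟩
    have hsub : Icc a b ⊆ Ioi (0:ℝ) := fun z hz => lt_of_lt_of_le ha hz.1
    have hmem : y ∈ Ioo (f b) (f a) := ⟨hfb, hfa⟩
    have := intermediate_value_Ioo' hab.le (hcont.mono hsub) hmem
    obtain ⟨x, hx, hfx⟩ := this
    exact ⟨x, lt_trans ha hx.1, hfx⟩
end

section
/- If α < 0, then setting κ₂ := (2/α)·max(1, A₀) one has κ₂ < 0 and 0 > h_A(x) ≥ κ₂·(1 + x^α) for all x > 0. -/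
/-- If `α < 0`, then with `κ₂ := (2/α)·max 1 A₀` one has `κ₂ < 0` and
`0 > h_A(x) ≥ κ₂·(1 + x^α)` for all `x > 0`. -/
theorem hA_bounds_neg_alpha
    (α γ h₀ A₀ : ℝ)
    (hα : α < 0)
    (hγ0 : 0 < γ) (hγ1 : γ ≤ 1)
    (hh0 : 0 < h₀) (hh1 : h₀ ≤ 1)
    (hA₀ : 0 ≤ A₀) :
    (2 / α) * max 1 A₀ < 0 ∧
    ∀ x : ℝ, 0 < x →
      (1 / α) * h₀ * x ^ α + (1 / α) * A₀ * x ^ (α * (1 - γ)) < 0 ∧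
      (1 / α) * h₀ * x ^ α + (1 / α) * A₀ * x ^ (α * (1 - γ)) ≥
        (2 / α) * max 1 A₀ * (1 + x ^ α) := by
  have hM1 : (1:ℝ) ≤ max 1 A₀ := le_max_left _ _
  have hM0 : (0:ℝ) < max 1 A₀ := lt_of_lt_of_le one_pos hM1
  have hAM : A₀ ≤ max 1 A₀ := le_max_right _ _
  have hinv : 1 / α < 0 := div_neg_of_pos_of_neg one_pos hα
  constructor
  · exact mul_neg_of_neg_of_pos (div_neg_of_pos_of_neg two_pos hα) hM0
  · intro x hx
    have hxα : 0 < x ^ α := Real.rpow_pos_of_pos hx α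
    have hxβ : 0 < x ^ (α * (1 - γ)) := Real.rpow_pos_of_pos hx _
    set M := max 1 A₀ with hMdef
    constructor
    · have h1 : (1 / α) * h₀ * x ^ α < 0 :=
        mul_neg_of_neg_of_pos (mul_neg_of_neg_of_pos hinv hh0) hxα
      have h2 : (1 / α) * A₀ * x ^ (α * (1 - γ)) ≤ 0 := by
        have : (1 / α) * A₀ ≤ 0 := mul_nonpos_of_nonpos_of_nonneg hinv.le hA₀
        exact mul_nonpos_of_nonpos_of_nonneg this hxβ.le
      linarith
    · have key : x ^ (α * (1 - γ)) ≤ 1 + x ^ α := by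
        rcases le_total x 1 with hle | hge
        · have : x ^ (α * (1 - γ)) ≤ x ^ α :=
            Real.rpow_le_rpow_of_exponent_ge hx hle (by nlinarith)
          linarith
        · have : x ^ (α * (1 - γ)) ≤ 1 :=
            Real.rpow_le_one_of_one_le_of_nonpos hge (by nlinarith)
          linarith
      have e1 : h₀ * x ^ α ≤ M * (1 + x ^ α) := by nlinarith
      have e2 : A₀ * x ^ (α * (1 - γ)) ≤ M * (1 + x ^ α) :=
        mul_le_mul hAM key hxβ.le hM0.le
      have hsum : h₀ * x ^ α + A₀ * x ^ (α * (1 - γ)) ≤ 2 * (M * (1 + x ^ α)) := by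
        linarith
      have := mul_le_mul_of_nonpos_left hsum hinv.le
      have h2a : 2 / α = 2 * (1 / α) := by ring
      rw [ge_iff_le, h2a]
      nlinarith [this]
end

section
/- If α ∈ (0,1), then the function z ↦ Φ(e^z) is convex on ℝ, where Φ(u) := sup_{x>0} (h_A(x) − u·x) for u > 0. -/
open Set

private lemma rpow_linear_bound {β ε : ℝ} (hβ0 : 0 ≤ β) (hβ1 : β < 1) (hε : 0 < ε)
    {x : ℝ} (hx : 0 < x) :
    x ^ β ≤ ε * x + ε ^ (-(β / (1 - β))) := by
  have h1β : 0 < 1 - β := by linarith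
  set x₀ : ℝ := ε ^ (-(1 / (1 - β))) with hx₀
  have hx₀pos : 0 < x₀ := Real.rpow_pos_of_pos hε _
  have hεx : 0 ≤ ε * x := by positivity
  have hK : (0:ℝ) ≤ ε ^ (-(β / (1 - β))) := (Real.rpow_pos_of_pos hε _).le
  rcases le_total x x₀ with h | h
  · have h2 : x ^ β ≤ x₀ ^ β := Real.rpow_le_rpow hx.le h hβ0
    have h3 : x₀ ^ β = ε ^ (-(β / (1 - β))) := by
      rw [hx₀, ← Real.rpow_mul hε.le]
      congr 1
      field_simp
    rw [h3] at h2
    linarith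
  · have h2 : x ^ (β - 1) ≤ x₀ ^ (β - 1) :=
      Real.rpow_le_rpow_of_nonpos hx₀pos h (by linarith)
    have h3 : x₀ ^ (β - 1) = ε := by
      rw [hx₀, ← Real.rpow_mul hε.le]
      have he : -(1 / (1 - β)) * (β - 1) = 1 := by field_simp; ring
      rw [he, Real.rpow_one]
    have h4 : x ^ β = x ^ (1:ℝ) * x ^ (β - 1) := by
      rw [← Real.rpow_add hx]; norm_num
    rw [h3] at h2
    have h5 : x ^ β ≤ x * ε := by
      rw [h4, Real.rpow_one]
      exact mul_le_mul_of_nonneg_left h2 hx.le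
    linarith

private lemma phi_bddAbove {c₁ c₂ kα kβ u : ℝ} (hc₁ : 0 ≤ c₁) (hc₂ : 0 ≤ c₂)
    (hkα0 : 0 ≤ kα) (hkα1 : kα < 1) (hkβ0 : 0 ≤ kβ) (hkβ1 : kβ < 1) (hu : 0 < u) :
    BddAbove ((fun x : ℝ => c₁ * x ^ kα + c₂ * x ^ kβ - u * x) '' Ioi (0 : ℝ)) := by
  set ε : ℝ := u / (c₁ + c₂ + 1) with hε
  have hεpos : 0 < ε := by positivity
  refine ⟨c₁ * ε ^ (-(kα / (1 - kα))) + c₂ * ε ^ (-(kβ / (1 - kβ))), ?_⟩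
  rintro y ⟨x, hx, rfl⟩
  simp only [mem_Ioi] at hx
  have h1 := rpow_linear_bound hkα0 hkα1 hεpos hx
  have h2 := rpow_linear_bound hkβ0 hkβ1 hεpos hx
  have h3 : (c₁ + c₂) * ε ≤ u := by
    rw [hε]
    rw [div_eq_mul_inv]
    rw [← mul_assoc]
    rw [mul_comm (c₁ + c₂) u, mul_assoc]
    nth_rewrite 2 [show u = u * 1 by ring]
    refine mul_le_mul_of_nonneg_left ?_ hu.le
    rw [mul_inv_le_iff₀ (by positivity)]
    linarith
  have h4 : c₁ * x ^ kα ≤ c₁ * (ε * x) + c₁ * ε ^ (-(kα / (1 - kα))) := by nlinarith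
  have h5 : c₂ * x ^ kβ ≤ c₂ * (ε * x) + c₂ * ε ^ (-(kβ / (1 - kβ))) := by nlinarith
  nlinarith

/-- If `α ∈ (0,1)`, the function `z ↦ Φ(e^z)` is convex on `ℝ`, where
`Φ(u) = sup_{x>0} (h_A(x) − u·x)` is the Legendre–Fenchel transform of
`h_A(x) = (1/α)·h₀·x^α + (1/α)·A₀·x^{α(1−γ)}`. -/
theorem phi_exp_convex
    (α γ h₀ A₀ : ℝ)
    (hα0 : 0 < α) (hα1 : α < 1)
    (hγ0 : 0 < γ) (hγ1 : γ ≤ 1)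
    (hh0 : 0 < h₀) (hh1 : h₀ ≤ 1)
    (hA₀ : 0 ≤ A₀) :
    ConvexOn ℝ univ (fun z : ℝ =>
      sSup ((fun x : ℝ =>
        (1 / α) * h₀ * x ^ α + (1 / α) * A₀ * x ^ (α * (1 - γ)) - Real.exp z * x) ''
          Ioi (0 : ℝ))) := by
  have hc₁ : 0 ≤ (1 / α) * h₀ := by positivity
  have hc₂ : 0 ≤ (1 / α) * A₀ := by positivity
  have hkβ0 : 0 ≤ α * (1 - γ) := by nlinarith
  have hkβ1 : α * (1 - γ) < 1 := by nlinarith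
  have hbdd : ∀ z : ℝ, BddAbove ((fun x : ℝ =>
      (1 / α) * h₀ * x ^ α + (1 / α) * A₀ * x ^ (α * (1 - γ)) - Real.exp z * x) ''
        Ioi (0 : ℝ)) := fun z =>
    phi_bddAbove hc₁ hc₂ hα0.le hα1 hkβ0 hkβ1 (Real.exp_pos z)
  refine ⟨convex_univ, ?_⟩
  intro z₁ _ z₂ _ a b ha hb hab
  simp only [smul_eq_mul]
  apply csSup_le (Nonempty.image _ ⟨1, by norm_num⟩)
  rintro y ⟨x, hx, rfl⟩
  simp only [mem_Ioi] at hx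
  set zb : ℝ := a * z₁ + b * z₂ with hzb
  set t : ℝ := Real.exp zb * x with htdef
  have ht : 0 < t := by positivity
  have hxt : x = t * Real.exp (-zb) := by
    rw [htdef, Real.exp_neg]
    field_simp
  have hpow : ∀ k z : ℝ, 0 ≤ k → (t * Real.exp (-z)) ^ k = t ^ k * Real.exp (-(k * z)) := by
    intro k z hk
    rw [Real.mul_rpow ht.le (Real.exp_pos _).le,
      Real.rpow_def_of_pos (Real.exp_pos _), Real.log_exp]
    ring_nf
  have hexp : ∀ k : ℝ, Real.exp (-(k * zb)) ≤
      a * Real.exp (-(k * z₁)) + b * Real.exp (-(k * z₂)) := by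
    intro k
    have h := convexOn_exp.2 (mem_univ (-(k * z₁))) (mem_univ (-(k * z₂))) ha hb hab
    simp only [smul_eq_mul] at h
    have he : -(k * zb) = a * -(k * z₁) + b * -(k * z₂) := by rw [hzb]; ring
    rw [he]
    exact h
  have hmem : ∀ z : ℝ,
      (1 / α) * h₀ * t ^ α * Real.exp (-(α * z)) +
        (1 / α) * A₀ * t ^ (α * (1 - γ)) * Real.exp (-(α * (1 - γ) * z)) - t ≤
      sSup ((fun x : ℝ =>
        (1 / α) * h₀ * x ^ α + (1 / α) * A₀ * x ^ (α * (1 - γ)) - Real.exp z * x) ''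
          Ioi (0 : ℝ)) := by
    intro z
    have hx' : t * Real.exp (-z) ∈ Ioi (0 : ℝ) := by
      simp only [mem_Ioi]; positivity
    refine le_trans (le_of_eq ?_) (le_csSup (hbdd z) (mem_image_of_mem _ hx'))
    rw [hpow α z hα0.le, hpow (α * (1 - γ)) z hkβ0]
    have : Real.exp z * (t * Real.exp (-z)) = t := by
      rw [Real.exp_neg]; field_simp
    rw [this]
    ring
  have hval : (1 / α) * h₀ * x ^ α + (1 / α) * A₀ * x ^ (α * (1 - γ)) - Real.exp zb * x =
      (1 / α) * h₀ * t ^ α * Real.exp (-(α * zb)) +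
        (1 / α) * A₀ * t ^ (α * (1 - γ)) * Real.exp (-(α * (1 - γ) * zb)) - t := by
    nth_rewrite 1 [hxt]
    nth_rewrite 1 [hxt]
    rw [hpow α zb hα0.le, hpow (α * (1 - γ)) zb hkβ0, htdef]
    ring
  show (1 / α) * h₀ * x ^ α + (1 / α) * A₀ * x ^ (α * (1 - γ)) - Real.exp zb * x ≤ _
  rw [hval]
  have e1 := hexp α
  have e2 := hexp (α * (1 - γ))
  have m1 : 0 ≤ (1 / α) * h₀ * t ^ α := by positivity
  have m2 : 0 ≤ (1 / α) * A₀ * t ^ (α * (1 - γ)) := by positivity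
  have step1 : (1 / α) * h₀ * t ^ α * Real.exp (-(α * zb)) +
      (1 / α) * A₀ * t ^ (α * (1 - γ)) * Real.exp (-(α * (1 - γ) * zb)) - t ≤
      a * ((1 / α) * h₀ * t ^ α * Real.exp (-(α * z₁)) +
        (1 / α) * A₀ * t ^ (α * (1 - γ)) * Real.exp (-(α * (1 - γ) * z₁)) - t) +
      b * ((1 / α) * h₀ * t ^ α * Real.exp (-(α * z₂)) +
        (1 / α) * A₀ * t ^ (α * (1 - γ)) * Real.exp (-(α * (1 - γ) * z₂)) - t) := by
    nlinarith [mul_le_mul_of_nonneg_left e1 m1, mul_le_mul_of_nonneg_left e2 m2]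
  refine step1.trans ?_
  exact add_le_add (mul_le_mul_of_nonneg_left (hmem z₁) ha)
    (mul_le_mul_of_nonneg_left (hmem z₂) hb)
end

section
/- The Legendre–Fenchel transform Φ(u) = sup_{x>0}(h_A(x) − u·x) is strictly decreasing and strictly convex on (0,∞). -/
open Set Filter Real Topology

private noncomputable def Fph (α γ h₀ A₀ u x : ℝ) : ℝ :=
  (1 / α) * h₀ * x ^ α + (1 / α) * A₀ * x ^ (α * (1 - γ)) - u * x

private lemma exists_max_aux {f : ℝ → ℝ} (hf : ContinuousOn f (Ioi 0))
    {x₁ : ℝ} (hx₁ : 0 < x₁)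
    (h0 : ∀ᶠ x in 𝓝[>] (0:ℝ), f x ≤ f x₁)
    (htop : ∀ᶠ x in atTop, f x ≤ f x₁) :
    ∃ c ∈ Ioi (0:ℝ), ∀ x ∈ Ioi (0:ℝ), f x ≤ f c := by
  obtain ⟨ε, hε, hεsub⟩ := mem_nhdsGT_iff_exists_Ioo_subset.mp h0
  obtain ⟨M, hM⟩ := eventually_atTop.mp htop
  have hε0 : (0:ℝ) < ε := hε
  set a := min (ε/2) x₁ with ha
  set b := max M x₁ with hb
  have ha0 : 0 < a := lt_min (by linarith) hx₁
  have hx₁mem : x₁ ∈ Icc a b := ⟨min_le_right _ _, le_max_right _ _⟩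
  have hsub : Icc a b ⊆ Ioi (0:ℝ) := fun x hx => lt_of_lt_of_le ha0 hx.1
  obtain ⟨c, hc, hcmax⟩ :=
    isCompact_Icc.exists_isMaxOn ⟨x₁, hx₁mem⟩ (hf.mono hsub)
  refine ⟨c, hsub hc, fun x hx => ?_⟩
  rcases lt_or_ge x a with h1 | h1
  · have hxε : x ∈ Ioo (0:ℝ) ε := ⟨hx, lt_of_lt_of_le h1 ((min_le_left _ _).trans (by linarith))⟩
    exact (hεsub hxε).trans (hcmax hx₁mem)
  · rcases le_or_gt x b with h2 | h2
    · exact hcmax ⟨h1, h2⟩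
    · exact (hM x (le_of_lt (lt_of_le_of_lt (le_max_left _ _) h2))).trans (hcmax hx₁mem)

private lemma Fph_contOn (α γ h₀ A₀ u : ℝ) :
    ContinuousOn (Fph α γ h₀ A₀ u) (Ioi 0) := by
  have hrc : ∀ p : ℝ, ContinuousOn (fun x : ℝ => x ^ p) (Ioi 0) := fun p x hx =>
    (Real.continuousAt_rpow_const x p (Or.inl (ne_of_gt hx))).continuousWithinAt
  exact ((continuousOn_const.mul (hrc α)).add (continuousOn_const.mul (hrc (α * (1 - γ))))).sub
    (continuousOn_const.mul continuousOn_id)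

private lemma Fph_exists_max (α γ h₀ A₀ u : ℝ)
    (hα : α < 0 ∨ (0 < α ∧ α < 1))
    (hγ0 : 0 < γ) (hγ1 : γ ≤ 1) (hh0 : 0 < h₀) (hA₀ : 0 ≤ A₀) (hu : 0 < u) :
    ∃ c ∈ Ioi (0:ℝ), ∀ x ∈ Ioi (0:ℝ), Fph α γ h₀ A₀ u x ≤ Fph α γ h₀ A₀ u c := by
  set q : ℝ := α * (1 - γ) with hqdef
  rcases hα with hneg | ⟨hpos, hlt⟩
  · -- α < 0
    have hia : 1/α < 0 := by
      exact div_neg_of_pos_of_neg one_pos hneg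
    have key1 : ∀ x ∈ Ioi (0:ℝ), Fph α γ h₀ A₀ u x ≤ (1/α) * h₀ * x ^ α := by
      intro x hx
      have h1 : 0 ≤ x ^ q := rpow_nonneg (le_of_lt hx) _
      have h2 : (1/α) * A₀ * x ^ q ≤ 0 :=
        mul_nonpos_of_nonpos_of_nonneg (mul_nonpos_of_nonpos_of_nonneg hia.le hA₀) h1
      have h3 : 0 ≤ u * x := mul_nonneg hu.le (le_of_lt hx)
      simp only [Fph]
      linarith
    have key2 : ∀ x ∈ Ioi (0:ℝ), Fph α γ h₀ A₀ u x ≤ -u * x := by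
      intro x hx
      have h1 : 0 ≤ x ^ q := rpow_nonneg (le_of_lt hx) _
      have h1' : 0 ≤ x ^ α := rpow_nonneg (le_of_lt hx) _
      have h2 : (1/α) * A₀ * x ^ q ≤ 0 :=
        mul_nonpos_of_nonpos_of_nonneg (mul_nonpos_of_nonpos_of_nonneg hia.le hA₀) h1
      have h2' : (1/α) * h₀ * x ^ α ≤ 0 :=
        mul_nonpos_of_nonpos_of_nonneg (mul_nonpos_of_nonpos_of_nonneg hia.le hh0.le) h1'
      simp only [Fph]; linarith
    have hT0 : Tendsto (fun x : ℝ => (1/α) * h₀ * x ^ α) (𝓝[>] (0:ℝ)) atBot := by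
      have h1 : Tendsto (fun x : ℝ => x ^ α) (𝓝[>] (0:ℝ)) atTop := by
        have h2 := (tendsto_rpow_atTop (show (0:ℝ) < -α by linarith)).comp
          tendsto_inv_nhdsGT_zero
        refine h2.congr' ?_
        filter_upwards [self_mem_nhdsWithin] with x hx
        have hx0 : (0:ℝ) < x := hx
        simp only [Function.comp]
        rw [Real.inv_rpow hx0.le, Real.rpow_neg hx0.le, inv_inv]
      exact (tendsto_const_mul_atBot_of_neg
        (mul_neg_of_neg_of_pos hia hh0)).2 h1
    have hTtop : Tendsto (fun x : ℝ => -u * x) atTop atBot :=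
      (tendsto_const_mul_atBot_of_neg (neg_lt_zero.mpr hu)).2 tendsto_id
    refine exists_max_aux (Fph_contOn α γ h₀ A₀ u) one_pos ?_ ?_
    · filter_upwards [hT0.eventually (eventually_le_atBot (Fph α γ h₀ A₀ u 1)),
        self_mem_nhdsWithin] with x h1 h2
      exact (key1 x h2).trans h1
    · filter_upwards [hTtop.eventually (eventually_le_atBot (Fph α γ h₀ A₀ u 1)),
        eventually_gt_atTop (0:ℝ)] with x h1 h2
      exact (key2 x h2).trans h1
  · -- 0 < α < 1
    have hαne : α ≠ 0 := ne_of_gt hpos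
    have hs : (0:ℝ) < 1 - α := by linarith
    have hsne : (1 - α) ≠ 0 := ne_of_gt hs
    have ha'pos : 0 < (1/α) * h₀ := mul_pos (by positivity) hh0
    have hb'nn : 0 ≤ (1/α) * A₀ := mul_nonneg (by positivity) hA₀
    have hq0 : 0 ≤ q := mul_nonneg hpos.le (by linarith)
    have hqα : q ≤ α := by nlinarith
    set x₁ : ℝ := ((1/α) * h₀ / (2*u)) ^ (1-α)⁻¹ with hx₁def
    have hx₁pos : 0 < x₁ := Real.rpow_pos_of_pos (by positivity) _
    have hx₁s : x₁ ^ (1-α) = (1/α) * h₀ / (2*u) := Real.rpow_inv_rpow (by positivity) hsne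
    have hrw1 : x₁ ^ (1-α) * x₁ ^ α = x₁ := by
      rw [← Real.rpow_add hx₁pos, show (1:ℝ)-α+α = 1 by ring, Real.rpow_one]
    have hux₁ : u * x₁ < (1/α) * h₀ * x₁ ^ α := by
      have hxa : 0 < x₁ ^ α := Real.rpow_pos_of_pos hx₁pos _
      have h1 : u * x₁ = u * (x₁ ^ (1-α)) * x₁ ^ α := by rw [mul_assoc, hrw1]
      have h2 : u * (x₁ ^ (1-α)) = (1/α) * h₀ / 2 := by rw [hx₁s]; field_simp
      rw [h1, h2]
      nlinarith
    -- limit at 0⁺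
    have hrc : ∀ p : ℝ, 0 ≤ p →
        Tendsto (fun x : ℝ => x ^ p) (𝓝[>] (0:ℝ)) (𝓝 ((0:ℝ) ^ p)) := fun p hp =>
      (Real.continuousAt_rpow_const 0 p (Or.inr hp)).tendsto.mono_left nhdsWithin_le_nhds
    have hT : Tendsto (Fph α γ h₀ A₀ u) (𝓝[>] (0:ℝ)) (𝓝 ((1/α) * A₀ * (0:ℝ) ^ q)) := by
      have h2 : Tendsto (fun x : ℝ => (1/α) * h₀ * x ^ α + (1/α) * A₀ * x ^ q - u * x)
          (𝓝[>] (0:ℝ))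
          (𝓝 ((1/α) * h₀ * (0:ℝ) ^ α + (1/α) * A₀ * (0:ℝ) ^ q - u * 0)) :=
        ((tendsto_const_nhds.mul (hrc α hpos.le)).add
          (tendsto_const_nhds.mul (hrc q hq0))).sub
          (tendsto_const_nhds.mul (tendsto_id.mono_left nhdsWithin_le_nhds))
      have h3 : (1/α) * h₀ * (0:ℝ) ^ α + (1/α) * A₀ * (0:ℝ) ^ q - u * 0
          = (1/α) * A₀ * (0:ℝ) ^ q := by
        rw [Real.zero_rpow hαne]; ring
      rw [h3] at h2
      exact h2
    have hlimlt : (1/α) * A₀ * (0:ℝ) ^ q < Fph α γ h₀ A₀ u x₁ := by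
      have h0q : (0:ℝ) ^ q ≤ x₁ ^ q := Real.rpow_le_rpow le_rfl hx₁pos.le hq0
      have h2 : (1/α) * A₀ * (0:ℝ) ^ q ≤ (1/α) * A₀ * x₁ ^ q :=
        mul_le_mul_of_nonneg_left h0q hb'nn
      have hFx₁ : Fph α γ h₀ A₀ u x₁
          = (1/α) * h₀ * x₁ ^ α + (1/α) * A₀ * x₁ ^ q - u * x₁ := rfl
      rw [hFx₁]
      linarith
    -- behaviour at ∞
    have hCpos : 0 < (1/α) * h₀ + (1/α) * A₀ := by linarith
    set C : ℝ := (1/α) * h₀ + (1/α) * A₀ with hC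
    set R : ℝ := max 1 ((2*C/u) ^ (1-α)⁻¹) with hR
    clear_value C R
    have hkey : ∀ x : ℝ, R ≤ x → Fph α γ h₀ A₀ u x ≤ -(u/2) * x := by
      intro x hx
      rw [hR] at hx
      have hx1 : (1:ℝ) ≤ x := le_trans (le_max_left _ _) hx
      have hx0 : (0:ℝ) < x := lt_of_lt_of_le one_pos hx1
      have hqle : x ^ q ≤ x ^ α := Real.rpow_le_rpow_of_exponent_le hx1 hqα
      have hxa : 0 < x ^ α := Real.rpow_pos_of_pos hx0 _
      have hKx : (2*C/u) ^ (1-α)⁻¹ ≤ x := le_trans (le_max_right _ _) hx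
      have hxs : 2*C/u ≤ x ^ (1-α) := by
        calc 2*C/u = ((2*C/u) ^ (1-α)⁻¹) ^ (1-α) :=
              (Real.rpow_inv_rpow (by positivity) hsne).symm
          _ ≤ x ^ (1-α) := Real.rpow_le_rpow (by positivity) hKx hs.le
      have hux : 2*C*x^α ≤ u * x := by
        have h1 := mul_le_mul_of_nonneg_left hxs hu.le
        have h2 : u * (2*C/u) = 2*C := by field_simp
        have h3 : (u * x^(1-α)) * x^α = u * x := by
          rw [mul_assoc, ← Real.rpow_add hx0, show (1:ℝ)-α+α = 1 by ring, Real.rpow_one]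
        have h4 := mul_le_mul_of_nonneg_right h1 hxa.le
        rw [h2, h3] at h4
        linarith
      have hF : Fph α γ h₀ A₀ u x ≤ C * x^α - u * x := by
        have h4 : (1/α) * A₀ * x ^ q ≤ (1/α) * A₀ * x ^ α :=
          mul_le_mul_of_nonneg_left hqle hb'nn
        have hFx : Fph α γ h₀ A₀ u x
            = (1/α) * h₀ * x ^ α + (1/α) * A₀ * x ^ q - u * x := rfl
        rw [hFx, hC]
        linarith
      have h5 : C * x^α - u * x ≤ -(u/2) * x := by linarith
      linarith
    have hTtop : Tendsto (fun x : ℝ => -(u/2) * x) atTop atBot :=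
      (tendsto_const_mul_atBot_of_neg (by linarith)).2 tendsto_id
    refine exists_max_aux (Fph_contOn α γ h₀ A₀ u) hx₁pos ?_ ?_
    · exact (hT.eventually_lt_const hlimlt).mono fun x hx => hx.le
    · filter_upwards [hTtop.eventually (eventually_le_atBot (Fph α γ h₀ A₀ u x₁)),
        eventually_ge_atTop R] with x h1 h2
      exact (hkey x h2).trans h1

private lemma Fph_crit (α γ h₀ A₀ u : ℝ) (hαne : α ≠ 0) {c : ℝ} (hc : 0 < c)
    (hmax : ∀ x ∈ Ioi (0:ℝ), Fph α γ h₀ A₀ u x ≤ Fph α γ h₀ A₀ u c) :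
    u = h₀ * c ^ (α - 1) + A₀ * (1 - γ) * c ^ (α * (1 - γ) - 1) := by
  have d1 : HasDerivAt (fun x : ℝ => x ^ α) (α * c ^ (α - 1)) c :=
    Real.hasDerivAt_rpow_const (Or.inl hc.ne')
  have d2 : HasDerivAt (fun x : ℝ => x ^ (α * (1 - γ)))
      ((α * (1 - γ)) * c ^ (α * (1 - γ) - 1)) c :=
    Real.hasDerivAt_rpow_const (Or.inl hc.ne')
  have d3 : HasDerivAt (fun x : ℝ => u * x) u c := by
    simpa using (hasDerivAt_id c).const_mul u
  have hd : HasDerivAt (Fph α γ h₀ A₀ u)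
      ((1/α) * h₀ * (α * c ^ (α - 1))
        + (1/α) * A₀ * ((α * (1 - γ)) * c ^ (α * (1 - γ) - 1)) - u) c :=
    ((d1.const_mul ((1/α) * h₀)).add (d2.const_mul ((1/α) * A₀))).sub d3
  have hloc : IsLocalMax (Fph α γ h₀ A₀ u) c :=
    (isMaxOn_iff.mpr hmax).isLocalMax (isOpen_Ioi.mem_nhds hc)
  have h0 := hloc.hasDerivAt_eq_zero hd
  have h1 : (1/α) * h₀ * (α * c ^ (α - 1)) = h₀ * c ^ (α - 1) := by field_simp
  have h2 : (1/α) * A₀ * ((α * (1 - γ)) * c ^ (α * (1 - γ) - 1))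
      = A₀ * (1 - γ) * c ^ (α * (1 - γ) - 1) := by field_simp
  rw [h1, h2] at h0
  linarith

/-- The Legendre–Fenchel transform `Φ(u) = sup_{x>0}(h_A(x) − u·x)` is strictly
decreasing and strictly convex on `(0,∞)`. -/
theorem phi_strictAnti_strictConvex
    (α γ h₀ A₀ : ℝ)
    (hα : α < 0 ∨ (0 < α ∧ α < 1))
    (hγ0 : 0 < γ) (hγ1 : γ ≤ 1)
    (hh0 : 0 < h₀) (hh1 : h₀ ≤ 1)
    (hA₀ : 0 ≤ A₀) :
    StrictAntiOn (fun u : ℝ =>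
      sSup ((fun x : ℝ =>
        (1 / α) * h₀ * x ^ α + (1 / α) * A₀ * x ^ (α * (1 - γ)) - u * x) ''
          Ioi (0 : ℝ))) (Ioi (0 : ℝ)) ∧
    StrictConvexOn ℝ (Ioi (0 : ℝ)) (fun u : ℝ =>
      sSup ((fun x : ℝ =>
        (1 / α) * h₀ * x ^ α + (1 / α) * A₀ * x ^ (α * (1 - γ)) - u * x) ''
          Ioi (0 : ℝ))) := by
  have hαne : α ≠ 0 := by rcases hα with h | h; exacts [ne_of_lt h, ne_of_gt h.1]
  set g : ℝ → ℝ := fun u => sSup ((Fph α γ h₀ A₀ u) '' Ioi (0:ℝ)) with hg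
  have hmax : ∀ u : ℝ, 0 < u → ∃ c, 0 < c ∧
      (∀ x ∈ Ioi (0:ℝ), Fph α γ h₀ A₀ u x ≤ Fph α γ h₀ A₀ u c) ∧
      g u = Fph α γ h₀ A₀ u c := by
    intro u hu
    obtain ⟨c, hc, hcm⟩ := Fph_exists_max α γ h₀ A₀ u hα hγ0 hγ1 hh0 hA₀ hu
    refine ⟨c, hc, hcm, ?_⟩
    have hgr : IsGreatest ((Fph α γ h₀ A₀ u) '' Ioi (0:ℝ)) (Fph α γ h₀ A₀ u c) :=
      ⟨mem_image_of_mem _ hc, by rintro y ⟨x, hx, rfl⟩; exact hcm x hx⟩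
    exact hgr.csSup_eq
  have hle : ∀ u : ℝ, 0 < u → ∀ x ∈ Ioi (0:ℝ), Fph α γ h₀ A₀ u x ≤ g u := by
    intro u hu x hx
    obtain ⟨c, hc, hcm, hceq⟩ := hmax u hu
    rw [hceq]; exact hcm x hx
  suffices h : StrictAntiOn g (Ioi (0:ℝ)) ∧ StrictConvexOn ℝ (Ioi (0:ℝ)) g by
    exact h
  constructor
  · intro u hu v hv huv
    have hu0 : (0:ℝ) < u := hu
    have hv0 : (0:ℝ) < v := hv
    obtain ⟨c, hc, hcm, hceq⟩ := hmax v hv0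
    have h2 : Fph α γ h₀ A₀ v c < Fph α γ h₀ A₀ u c := by
      have h3 : u * c < v * c := mul_lt_mul_of_pos_right huv hc
      simp only [Fph]
      linarith
    calc g v = Fph α γ h₀ A₀ v c := hceq
      _ < Fph α γ h₀ A₀ u c := h2
      _ ≤ g u := hle u hu0 c hc
  · refine ⟨convex_Ioi 0, ?_⟩
    intro u hu v hv huv a b ha hb hab
    have hu0 : (0:ℝ) < u := hu
    have hv0 : (0:ℝ) < v := hv
    have hw0 : (0:ℝ) < a * u + b * v := add_pos (mul_pos ha hu0) (mul_pos hb hv0)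
    simp only [smul_eq_mul]
    obtain ⟨c, hc, hcm, hceq⟩ := hmax (a * u + b * v) hw0
    have hsplit : Fph α γ h₀ A₀ (a * u + b * v) c
        = a * Fph α γ h₀ A₀ u c + b * Fph α γ h₀ A₀ v c := by
      simp only [Fph]
      linear_combination (-((1/α) * h₀ * c ^ α + (1/α) * A₀ * c ^ (α * (1 - γ)))) * hab
    have hulec : Fph α γ h₀ A₀ u c ≤ g u := hle u hu0 c hc
    have hvlec : Fph α γ h₀ A₀ v c ≤ g v := hle v hv0 c hc
    rcases lt_or_eq_of_le hulec with hlt | heqq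
    · calc g (a * u + b * v) = Fph α γ h₀ A₀ (a * u + b * v) c := hceq
        _ = a * Fph α γ h₀ A₀ u c + b * Fph α γ h₀ A₀ v c := hsplit
        _ < a * g u + b * g v :=
          add_lt_add_of_lt_of_le (mul_lt_mul_of_pos_left hlt ha)
            (mul_le_mul_of_nonneg_left hvlec hb.le)
    · exfalso
      have hmu : ∀ x ∈ Ioi (0:ℝ), Fph α γ h₀ A₀ u x ≤ Fph α γ h₀ A₀ u c := by
        intro x hx
        rw [heqq]
        exact hle u hu0 x hx
      have hu' := Fph_crit α γ h₀ A₀ u hαne hc hmu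
      have hw' := Fph_crit α γ h₀ A₀ (a * u + b * v) hαne hc hcm
      have h8 : u = a * u + b * v := hu'.trans hw'.symm
      have h9 : b * u = b * v := by linear_combination h8 + u * hab
      exact huv (mul_left_cancel₀ hb.ne' h9)
end
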